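/- Let n ≥ 2, k ≥ 1, and let φ be a permutation of W_n^k. Define the permutation ψ of W_n^{k+1} by ψ = (id_1 × φ)(φ^{-1} × id_1). Then for every r ≥ 1 one has ψ^{(r)} = (id_r × φ)(φ^{-1} × id_r) as permutations of W_n^{k+r}, and in particular ψ^{(k)} = φ^{-1} × φ as permutations of W_n^{2k}. -/
import Mathlib

/-- Splitting a word of length `c = a + b` into its first `a` letters and last `b` letters. -/
def wordSplit (n a b c : ℕ) (h : a + b = c) :
    (Fin c → Fin n) ≃ (Fin a → Fin n) × (Fin b → Fin n) :=
  (Equiv.arrowCongr (finCongr h.symm) (Equiv.refl (Fin n))).trans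
    ((Equiv.arrowCongr finSumFinEquiv.symm (Equiv.refl (Fin n))).trans
      (Equiv.sumArrowEquivProdArrow _ _ _))

/-- The permutation `φ × ρ` of words of length `c = a + b`: `φ` acts on the first `a` letters
and `ρ` on the last `b` letters. -/
def prodPerm (n a b c : ℕ) (h : a + b = c) (φ : Equiv.Perm (Fin a → Fin n))
    (ρ : Equiv.Perm (Fin b → Fin n)) : Equiv.Perm (Fin c → Fin n) :=
  ((wordSplit n a b c h).trans (φ.prodCongr ρ)).trans (wordSplit n a b c h).symm

/-- `phiIter φ r` is the permutation `φ^{(r+1)} = (id_r × φ)(id_{r-1} × φ × id_1)⋯(φ × id_r)`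
of words of length `k + r` (the rightmost factor acting first). -/
def phiIter {n k : ℕ} (φ : Equiv.Perm (Fin k → Fin n)) :
    (r : ℕ) → Equiv.Perm (Fin (k + r) → Fin n)
  | 0 => φ
  | r + 1 =>
      (prodPerm n (k + r) 1 (k + (r + 1)) (by omega) (phiIter φ r) (Equiv.refl _)).trans
        (prodPerm n (r + 1) k (k + (r + 1)) (by omega) (Equiv.refl _) φ)



/-- The block of `k` letters of `w` starting at position `j`. -/
def blk {n c : ℕ} (k j : ℕ) (hjk : j + k ≤ c) (w : Fin c → Fin n) : Fin k → Fin n :=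
  fun t => w ⟨j + t, by have := t.isLt; omega⟩

/-- Apply `φ` to the letters in positions `[j, j+k)`, identity elsewhere. -/
def appAt {n c : ℕ} (k j : ℕ) (hjk : j + k ≤ c)
    (φ : (Fin k → Fin n) → (Fin k → Fin n)) (w : Fin c → Fin n) : Fin c → Fin n :=
  fun i => if h : j ≤ (i : ℕ) ∧ (i : ℕ) < j + k then
      φ (blk k j hjk w) ⟨(i : ℕ) - j, by omega⟩
    else w i

lemma appAt_of_mem {n c : ℕ} {k j : ℕ} (hjk : j + k ≤ c)
    (φ : (Fin k → Fin n) → (Fin k → Fin n)) (w : Fin c → Fin n) {i : Fin c}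
    (h1 : j ≤ (i : ℕ)) (h2 : (i : ℕ) < j + k) :
    appAt k j hjk φ w i = φ (blk k j hjk w) ⟨(i : ℕ) - j, by omega⟩ :=
  dif_pos ⟨h1, h2⟩

lemma appAt_of_not_mem {n c : ℕ} {k j : ℕ} (hjk : j + k ≤ c)
    (φ : (Fin k → Fin n) → (Fin k → Fin n)) (w : Fin c → Fin n) {i : Fin c}
    (h : ¬ (j ≤ (i : ℕ) ∧ (i : ℕ) < j + k)) :
    appAt k j hjk φ w i = w i :=
  dif_neg h

lemma blk_appAt_same {n c : ℕ} {k j : ℕ} (hjk : j + k ≤ c)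
    (φ : (Fin k → Fin n) → (Fin k → Fin n)) (w : Fin c → Fin n) :
    blk k j hjk (appAt k j hjk φ w) = φ (blk k j hjk w) := by
  funext t
  have ht := t.isLt
  show appAt k j hjk φ w ⟨j + t, by omega⟩ = _
  rw [appAt_of_mem hjk φ w (show j ≤ j + (t : ℕ) by omega)
    (show j + (t : ℕ) < j + k by omega)]
  exact congrArg _ (Fin.ext (show j + (t : ℕ) - j = (t : ℕ) by omega))

lemma blk_appAt_disjoint {n c : ℕ} {k j k' j' : ℕ} (h1 : j + k ≤ c) (h2 : j' + k' ≤ c)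
    (hd : j + k ≤ j' ∨ j' + k' ≤ j)
    (φ : (Fin k' → Fin n) → (Fin k' → Fin n)) (w : Fin c → Fin n) :
    blk k j h1 (appAt k' j' h2 φ w) = blk k j h1 w := by
  funext t
  have ht := t.isLt
  show appAt k' j' h2 φ w ⟨j + t, by omega⟩ = w ⟨j + t, by omega⟩
  exact appAt_of_not_mem h2 φ w
    (show ¬ (j' ≤ j + (t : ℕ) ∧ j + (t : ℕ) < j' + k') by omega)

lemma appAt_comp {n c : ℕ} (k j : ℕ) (hjk : j + k ≤ c)
    (φ ρ : (Fin k → Fin n) → (Fin k → Fin n)) (w : Fin c → Fin n) :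
    appAt k j hjk φ (appAt k j hjk ρ w) = appAt k j hjk (φ ∘ ρ) w := by
  funext i
  by_cases h : j ≤ (i : ℕ) ∧ (i : ℕ) < j + k
  · rw [appAt_of_mem hjk φ _ h.1 h.2, appAt_of_mem hjk (φ ∘ ρ) w h.1 h.2,
      blk_appAt_same]
    rfl
  · rw [appAt_of_not_mem hjk φ _ h, appAt_of_not_mem hjk ρ w h,
      appAt_of_not_mem hjk (φ ∘ ρ) w h]

lemma appAt_id {n c : ℕ} (k j : ℕ) (hjk : j + k ≤ c) (w : Fin c → Fin n) :
    appAt k j hjk id w = w := by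
  funext i
  by_cases h : j ≤ (i : ℕ) ∧ (i : ℕ) < j + k
  · rw [appAt_of_mem hjk id w h.1 h.2]
    exact congrArg w (Fin.ext (show j + ((i : ℕ) - j) = (i : ℕ) by omega))
  · exact appAt_of_not_mem hjk id w h

def permAt {n c : ℕ} (k j : ℕ) (hjk : j + k ≤ c) (φ : Equiv.Perm (Fin k → Fin n)) :
    Equiv.Perm (Fin c → Fin n) where
  toFun := appAt k j hjk φ
  invFun := appAt k j hjk φ.symm
  left_inv w := by
    rw [appAt_comp]
    have : (⇑φ.symm ∘ ⇑φ) = (id : (Fin k → Fin n) → _) := by funext u; simp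
    rw [this, appAt_id]
  right_inv w := by
    rw [appAt_comp]
    have : (⇑φ ∘ ⇑φ.symm) = (id : (Fin k → Fin n) → _) := by funext u; simp
    rw [this, appAt_id]

lemma permAt_apply {n c : ℕ} (k j : ℕ) (hjk : j + k ≤ c) (φ : Equiv.Perm (Fin k → Fin n))
    (w : Fin c → Fin n) : permAt k j hjk φ w = appAt k j hjk φ w := rfl

lemma permAt_congr {n c : ℕ} {k j j' : ℕ} (hjk : j + k ≤ c) (hjk' : j' + k ≤ c)
    (h : j = j') (φ : Equiv.Perm (Fin k → Fin n)) :
    permAt k j hjk φ = permAt k j' hjk' φ := by subst h; rfl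

lemma permAt_mul {n c : ℕ} (k j : ℕ) (hjk : j + k ≤ c) (φ ρ : Equiv.Perm (Fin k → Fin n)) :
    permAt k j hjk φ * permAt k j hjk ρ = permAt k j hjk (φ * ρ) := by
  ext w : 1
  show appAt k j hjk φ (appAt k j hjk ρ w) = appAt k j hjk (⇑(φ * ρ)) w
  rw [appAt_comp]
  rfl

lemma permAt_refl {n c : ℕ} (k j : ℕ) (hjk : j + k ≤ c) :
    permAt (n := n) k j hjk (Equiv.refl _) = 1 := by
  ext w : 1
  exact appAt_id k j hjk w

lemma wordSplit_apply {n a b c : ℕ} (h : a + b = c) (w : Fin c → Fin n) :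
    wordSplit n a b c h w = (blk a 0 (by omega) w, blk b a (by omega) w) := by
  refine Prod.ext ?_ ?_ <;> funext i <;> have hi := i.isLt
  · show w ⟨(i : ℕ), by omega⟩ = w ⟨0 + (i : ℕ), by omega⟩
    exact congrArg w (Fin.ext (show (i : ℕ) = 0 + (i : ℕ) by omega))
  · show w ⟨a + (i : ℕ), by omega⟩ = w ⟨a + (i : ℕ), by omega⟩
    rfl

lemma prodPerm_eq {n a b c : ℕ} (h : a + b = c) (φ : Equiv.Perm (Fin a → Fin n))
    (ρ : Equiv.Perm (Fin b → Fin n)) :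
    prodPerm n a b c h φ ρ = permAt a 0 (by omega) φ * permAt b a (by omega) ρ := by
  ext w : 1
  show (wordSplit n a b c h).symm ((φ.prodCongr ρ) (wordSplit n a b c h w)) =
    appAt a 0 (by omega) (⇑φ) (appAt b a (by omega) (⇑ρ) w)
  rw [Equiv.symm_apply_eq, wordSplit_apply, wordSplit_apply, Equiv.prodCongr_apply,
    Prod.map_apply, blk_appAt_same, blk_appAt_disjoint _ _ (Or.inl (by omega)),
    blk_appAt_disjoint _ _ (Or.inr (by omega)), blk_appAt_same]

lemma prodPerm_refl_left {n a b c : ℕ} (h : a + b = c) (ρ : Equiv.Perm (Fin b → Fin n)) :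
    prodPerm n a b c h (Equiv.refl _) ρ = permAt b a (by omega) ρ := by
  rw [prodPerm_eq, permAt_refl, one_mul]

lemma prodPerm_refl_right {n a b c : ℕ} (h : a + b = c) (φ : Equiv.Perm (Fin a → Fin n)) :
    prodPerm n a b c h φ (Equiv.refl _) = permAt a 0 (by omega) φ := by
  rw [prodPerm_eq, permAt_refl, mul_one]

lemma permAt_nest {n c d : ℕ} (k j s : ℕ) (h1 : s + d ≤ c) (h2 : j + k ≤ d)
    (φ : Equiv.Perm (Fin k → Fin n)) :
    permAt d s h1 (permAt k j h2 φ) = permAt k (s + j) (by omega) φ := by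
  ext w : 1
  show appAt d s h1 (⇑(permAt k j h2 φ)) w = appAt k (s + j) (by omega) (⇑φ) w
  funext i
  by_cases hmem : s + j ≤ (i : ℕ) ∧ (i : ℕ) < s + j + k
  · rw [appAt_of_mem h1 _ w (by omega) (by omega),
      appAt_of_mem _ _ w hmem.1 (by omega)]
    rw [permAt_apply, appAt_of_mem h2 _ _ (show j ≤ (i : ℕ) - s by omega)
      (show (i : ℕ) - s < j + k by omega)]
    have harg : blk k j h2 (blk d s h1 w) = blk k (s + j) (by omega) w := by
      funext t
      have ht := t.isLt
      show w ⟨s + (j + (t : ℕ)), by omega⟩ = w ⟨s + j + (t : ℕ), by omega⟩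
      exact congrArg w (Fin.ext (show s + (j + (t : ℕ)) = s + j + (t : ℕ) by omega))
    rw [harg]
    exact congrArg _ (Fin.ext (show (i : ℕ) - s - j = (i : ℕ) - (s + j) by omega))
  · rw [appAt_of_not_mem _ _ w hmem]
    by_cases hbig : s ≤ (i : ℕ) ∧ (i : ℕ) < s + d
    · rw [appAt_of_mem h1 _ w hbig.1 hbig.2, permAt_apply,
        appAt_of_not_mem h2 _ _ (show ¬ (j ≤ (i : ℕ) - s ∧ (i : ℕ) - s < j + k) by omega)]
      show w ⟨s + ((i : ℕ) - s), _⟩ = w i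
      exact congrArg w (Fin.ext (show s + ((i : ℕ) - s) = (i : ℕ) by omega))
    · exact appAt_of_not_mem h1 _ w hbig

lemma permAt_comm {n c : ℕ} {k j k' j' : ℕ} (h1 : j + k ≤ c) (h2 : j' + k' ≤ c)
    (hd : j + k ≤ j') (φ : Equiv.Perm (Fin k → Fin n)) (ρ : Equiv.Perm (Fin k' → Fin n)) :
    permAt k j h1 φ * permAt k' j' h2 ρ = permAt k' j' h2 ρ * permAt k j h1 φ := by
  ext w : 1
  show appAt k j h1 (⇑φ) (appAt k' j' h2 (⇑ρ) w)
    = appAt k' j' h2 (⇑ρ) (appAt k j h1 (⇑φ) w)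
  funext i
  by_cases hm1 : j ≤ (i : ℕ) ∧ (i : ℕ) < j + k
  · rw [appAt_of_mem h1 _ _ hm1.1 hm1.2, blk_appAt_disjoint _ _ (Or.inl hd),
      appAt_of_not_mem h2 _ _ (by omega), appAt_of_mem h1 _ _ hm1.1 hm1.2]
  · rw [appAt_of_not_mem h1 _ _ hm1]
    by_cases hm2 : j' ≤ (i : ℕ) ∧ (i : ℕ) < j' + k'
    · rw [appAt_of_mem h2 _ _ hm2.1 hm2.2, appAt_of_mem h2 _ _ hm2.1 hm2.2,
        blk_appAt_disjoint _ _ (Or.inr hd)]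
    · rw [appAt_of_not_mem h2 _ _ hm2, appAt_of_not_mem h2 _ _ hm2,
        appAt_of_not_mem h1 _ _ hm1]

lemma permAt_one {n c : ℕ} (k j : ℕ) (hjk : j + k ≤ c) :
    permAt (n := n) k j hjk 1 = 1 :=
  permAt_refl k j hjk

/-- For `ψ = (id_1 × φ)(φ⁻¹ × id_1)` one has `ψ^{(r)} = (id_r × φ)(φ⁻¹ × id_r)` for all `r ≥ 1`
(here `phiIter ψ r = ψ^{(r+1)}`), and in particular `ψ^{(k)} = φ⁻¹ × φ`. -/
theorem stmt_8 {n : ℕ} (hn : 2 ≤ n) {k : ℕ} (hk : 1 ≤ k)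
    (φ : Equiv.Perm (Fin k → Fin n)) :
    (∀ r : ℕ,
      phiIter ((prodPerm n 1 k (k + 1) (Nat.add_comm 1 k) (Equiv.refl _) φ) *
          (prodPerm n k 1 (k + 1) rfl φ.symm (Equiv.refl _))) r
        = (prodPerm n (r + 1) k ((k + 1) + r) (by omega) (Equiv.refl _) φ) *
          (prodPerm n k (r + 1) ((k + 1) + r) (by omega) φ.symm (Equiv.refl _))) ∧
    phiIter ((prodPerm n 1 k (k + 1) (Nat.add_comm 1 k) (Equiv.refl _) φ) *
        (prodPerm n k 1 (k + 1) rfl φ.symm (Equiv.refl _))) (k - 1)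
      = prodPerm n k k ((k + 1) + (k - 1)) (by omega) φ.symm φ := by
  have hsymm : φ.symm * φ = 1 := by ext x; simp
  have key : ∀ r : ℕ,
      phiIter ((prodPerm n 1 k (k + 1) (Nat.add_comm 1 k) (Equiv.refl _) φ) *
          (prodPerm n k 1 (k + 1) rfl φ.symm (Equiv.refl _))) r
        = permAt k (r + 1) (by omega) φ * permAt k 0 (by omega) φ.symm := by
    intro r
    induction r with
    | zero =>
        show (prodPerm n 1 k (k + 1) (Nat.add_comm 1 k) (Equiv.refl _) φ) *
            (prodPerm n k 1 (k + 1) rfl φ.symm (Equiv.refl _)) = _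
        rw [prodPerm_refl_left, prodPerm_refl_right]
    | succ r ih =>
        show (prodPerm n (r + 1) (k + 1) ((k + 1) + (r + 1)) (by omega) (Equiv.refl _)
              ((prodPerm n 1 k (k + 1) (Nat.add_comm 1 k) (Equiv.refl _) φ) *
               (prodPerm n k 1 (k + 1) rfl φ.symm (Equiv.refl _)))) *
            (prodPerm n ((k + 1) + r) 1 ((k + 1) + (r + 1)) (by omega)
              (phiIter ((prodPerm n 1 k (k + 1) (Nat.add_comm 1 k) (Equiv.refl _) φ) *
                (prodPerm n k 1 (k + 1) rfl φ.symm (Equiv.refl _))) r)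
              (Equiv.refl _)) = _
        rw [ih]
        simp only [prodPerm_refl_left, prodPerm_refl_right]
        simp only [← permAt_mul]
        simp only [permAt_nest]
        simp only [Nat.add_zero, Nat.zero_add]
        rw [mul_assoc, ← mul_assoc (permAt k (r + 1) (by omega) φ.symm), permAt_mul,
          hsymm, permAt_one, one_mul]
  constructor
  · intro r
    rw [key r, prodPerm_refl_left, prodPerm_refl_right]
  · rw [key (k - 1),
      permAt_congr (by omega) (show k + k ≤ (k + 1) + (k - 1) by omega)
        (show (k - 1) + 1 = k by omega) φ,
      prodPerm_eq]
    exact (permAt_comm (show 0 + k ≤ (k + 1) + (k - 1) by omega)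
      (show k + k ≤ (k + 1) + (k - 1) by omega) (by omega) φ.symm φ).symm
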